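/- Let v be a nonempty finite word over {a,b}. Then exactly one letter c ∈ {a,b} satisfies p₀(cv) = p₀(v) (where cv denotes v with the letter c prepended), and the other letter e ∈ {a,b} \\ {c} satisfies p₀(ev) ≥ p₀(v) + 1. -/

import Mathlib

/-- The prefix of length `n` of the infinite word `z : ℕ → Bool`
(letters `a`/`b` are modeled as the two elements of `Bool`). -/
def prefixWord (z : ℕ → Bool) (n : ℕ) : List Bool := (List.range n).map z

/-- `z` is periodic with period `p ≥ 1`: `z (i + p) = z i` for all `i`. -/
def IsPeriodicWith (z : ℕ → Bool) (p : ℕ) : Prop := 1 ≤ p ∧ ∀ i, z (i + p) = z i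

/-- `z` is a periodic infinite word. -/
def IsPeriodicWord (z : ℕ → Bool) : Prop := ∃ p, IsPeriodicWith z p

/-- The minimal period of `z` (junk value `0` if `z` is not periodic). -/
noncomputable def minPeriod (z : ℕ → Bool) : ℕ := sInf {p | IsPeriodicWith z p}

/-- The finite word `v` occurs in `z` as a contiguous segment starting at position `n`. -/
def OccursAt (v : List Bool) (z : ℕ → Bool) (n : ℕ) : Prop :=
  ∀ i < v.length, z (n + i) = v.getD i false

/-- The finite word `v` occurs somewhere in `z` as a contiguous segment. -/
def Occurs (v : List Bool) (z : ℕ → Bool) : Prop := ∃ n, OccursAt v z n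

/-- The minimal potential period `p₀ v` of a finite word `v`: the minimum, over all
periodic infinite words `z` in which `v` occurs, of the minimal period of `z`;
`p₀` of the empty word is `0`. -/
noncomputable def p0 (v : List Bool) : ℕ :=
  if v = [] then 0
  else sInf {p | ∃ z : ℕ → Bool, IsPeriodicWord z ∧ Occurs v z ∧ minPeriod z = p}

/-- The `d`-length of a finite word: the sum of the lengths `d (w|_i)` of the tree
edges along the path from the empty word to `w` (the edge joining a nonempty word `u`
to the word obtained by deleting its last letter has length `d u`). -/
noncomputable def dLength (d : List Bool → ℝ) (w : List Bool) : ℝ :=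
  ∑ i ∈ Finset.range w.length, d (w.take (i + 1))

/-- The longest common prefix of two finite words. -/
def lcp : List Bool → List Bool → List Bool
  | a :: u, b :: v => if a = b then a :: lcp u v else []
  | _, _ => []

/-- The tree metric on finite words induced by the edge lengths `d`:
`ρ(u,v) = l_d(u) + l_d(v) − 2 l_d(u ∧ v)`. -/
noncomputable def treeDist (d : List Bool → ℝ) (u v : List Bool) : ℝ :=
  dLength d u + dLength d v - 2 * dLength d (lcp u v)

/-- The specific edge lengths `d(u) = 2 ^ (−p₀ u)` used in the counterexample. -/
noncomputable def dEdge (u : List Bool) : ℝ := 2 ^ (-(p0 u : ℤ))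

/-- Prepending a finite word `w` to an infinite word `z`. -/
def prependWord (w : List Bool) (z : ℕ → Bool) : ℕ → Bool :=
  fun i => if i < w.length then w.getD i false else z (i - w.length)

lemma exists_periodic_occurs (w : List Bool) (hw : w ≠ []) :
    ∃ z, IsPeriodicWith z w.length ∧ OccursAt w z 0 := by
  refine ⟨fun i => w.getD (i % w.length) false, ⟨List.length_pos_iff.2 hw, ?_⟩, ?_⟩
  · intro i; simp [Nat.add_mod_right]
  · intro i hi; simp [Nat.mod_eq_of_lt hi]

lemma minPeriod_isPeriodicWith {z : ℕ → Bool} (hz : IsPeriodicWord z) :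
    IsPeriodicWith z (minPeriod z) :=
  Nat.sInf_mem hz

lemma minPeriod_le {z : ℕ → Bool} {p : ℕ} (hp : IsPeriodicWith z p) :
    minPeriod z ≤ p :=
  Nat.sInf_le hp

lemma p0_spec (w : List Bool) (hw : w ≠ []) :
    ∃ z, IsPeriodicWord z ∧ Occurs w z ∧ minPeriod z = p0 w := by
  obtain ⟨z, hper, hocc⟩ := exists_periodic_occurs w hw
  have hne : {p | ∃ z, IsPeriodicWord z ∧ Occurs w z ∧ minPeriod z = p}.Nonempty :=
    ⟨minPeriod z, z, ⟨_, hper⟩, ⟨0, hocc⟩, rfl⟩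
  rw [p0, if_neg hw]
  exact Nat.sInf_mem hne

lemma p0_le {w : List Bool} (hw : w ≠ []) {z : ℕ → Bool}
    (hz : IsPeriodicWord z) (hocc : Occurs w z) : p0 w ≤ minPeriod z := by
  rw [p0, if_neg hw]
  exact Nat.sInf_le ⟨z, hz, hocc, rfl⟩

lemma p0_le_length (w : List Bool) (hw : w ≠ []) : p0 w ≤ w.length := by
  obtain ⟨z, hper, hocc⟩ := exists_periodic_occurs w hw
  exact le_trans (p0_le hw ⟨_, hper⟩ ⟨0, hocc⟩) (minPeriod_le hper)

lemma occurs_of_occurs_cons {c : Bool} {v : List Bool} {z : ℕ → Bool}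
    (h : Occurs (c :: v) z) : Occurs v z := by
  obtain ⟨n, hn⟩ := h
  refine ⟨n + 1, fun i hi => ?_⟩
  have := hn (i + 1) (by simpa using Nat.succ_lt_succ hi)
  simpa [Nat.add_assoc, Nat.add_comm 1 i] using this

lemma p0_pos (w : List Bool) (hw : w ≠ []) : 1 ≤ p0 w := by
  obtain ⟨z, hz, _, hmin⟩ := p0_spec w hw
  rw [← hmin]
  exact (minPeriod_isPeriodicWith hz).1

/-- If `z` is a periodic word with minimal period `p0 v` containing `c :: v`, then the
letter `c` is forced: it equals `v.getD (p0 v - 1) false`. -/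
lemma forced_letter {c : Bool} {v : List Bool} (hv : v ≠ []) {z : ℕ → Bool}
    (hz : IsPeriodicWord z) (hocc : Occurs (c :: v) z)
    (hmin : minPeriod z = p0 v) : c = v.getD (p0 v - 1) false := by
  obtain ⟨n, hn⟩ := hocc
  have hper := minPeriod_isPeriodicWith hz
  rw [hmin] at hper
  have h1 : 1 ≤ p0 v := p0_pos v hv
  have h2 : p0 v ≤ v.length := p0_le_length v hv
  have hc : z n = c := by simpa using hn 0 (by simp)
  have hp : z (n + p0 v) = (c :: v).getD (p0 v) false :=
    hn (p0 v) (by simp; omega)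
  have : z (n + p0 v) = z n := hper.2 n
  rw [hp, hc] at this
  have hgd : (c :: v).getD (p0 v) false = v.getD (p0 v - 1) false := by
    obtain ⟨q, hq⟩ : ∃ q, p0 v = q + 1 := ⟨p0 v - 1, by omega⟩
    simp [hq]
  rw [hgd] at this
  exact this.symm

/-- For a nonempty word `v`, exactly one letter `c` satisfies `p₀ (c :: v) = p₀ v`,
and the other letter `!c` satisfies `p₀ (!c :: v) ≥ p₀ v + 1`. -/
theorem p0_cons_dichotomy (v : List Bool) (hv : v ≠ []) :
    ∃ c : Bool, p0 (c :: v) = p0 v ∧ p0 v + 1 ≤ p0 ((!c) :: v) := by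
  obtain ⟨z, hz, ⟨n, hn⟩, hmin⟩ := p0_spec v hv
  have hper := minPeriod_isPeriodicWith hz
  have hp1 : 1 ≤ minPeriod z := hper.1
  -- v also occurs at n + minPeriod z ≥ n + 1, so we can read the preceding letter
  set m := n + minPeriod z - 1 with hm
  set c := z m with hc
  have hoccc : OccursAt (c :: v) z m := by
    intro i hi
    cases i with
    | zero => simp [hc]
    | succ j =>
        have hj : j < v.length := by simpa using hi
        have h1 : m + (j + 1) = (n + j) + minPeriod z := by omega
        rw [h1, hper.2 (n + j), hn j hj]
        simp
  have hle : p0 (c :: v) ≤ p0 v := by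
    rw [← hmin]
    exact p0_le (by simp) hz ⟨m, hoccc⟩
  have hge : ∀ b : Bool, p0 v ≤ p0 (b :: v) := by
    intro b
    obtain ⟨z', hz', hocc', hmin'⟩ := p0_spec (b :: v) (by simp)
    rw [← hmin']
    exact p0_le hv hz' (occurs_of_occurs_cons hocc')
  have heq : p0 (c :: v) = p0 v := le_antisymm hle (hge c)
  refine ⟨c, heq, ?_⟩
  -- forced letter: c = v.getD (p0 v - 1) false
  obtain ⟨z1, hz1, hocc1, hmin1⟩ := p0_spec (c :: v) (by simp)
  have hc_forced : c = v.getD (p0 v - 1) false :=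
    forced_letter hv hz1 hocc1 (by rw [hmin1, heq])
  have hne : p0 ((!c) :: v) ≠ p0 v := by
    intro habs
    obtain ⟨z2, hz2, hocc2, hmin2⟩ := p0_spec ((!c) :: v) (by simp)
    have : (!c) = v.getD (p0 v - 1) false :=
      forced_letter hv hz2 hocc2 (by rw [hmin2, habs])
    rw [← hc_forced] at this
    simp at this
  have := hge (!c)
  omega
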